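/- There exists a Borel set S ⊆ [0,1]^ℕ of full measure with respect to the infinite product of Lebesgue measure such that the map J(x) = (t_n(x))_{n≥1}, with t_n(x) = #{k ≤ n : x_k < x_n}, is injective on S. (The combinatorial encoding J distinguishes almost all points of the infinite-dimensional cube.) -/

import Mathlib

open MeasureTheory unitInterval

/-- The infinite product of Lebesgue measures on `[0,1]^ℕ`, characterized as the projective
limit of the finite-dimensional product Lebesgue measures. -/
def IsProductLebesgue (μ : Measure (ℕ → I)) : Prop :=
  IsProjectiveLimit μ (fun J : Finset ℕ => Measure.pi fun _ : J => (volume : Measure I))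

/-- `tCode x n = #{k < n : x k < x n}` is, in 0-based indexing, the quantity
`t_{n+1}(x) = #{k ≤ n+1 : x_k < x_{n+1}}` of the paper; it takes values in `{0, 1, …, n}`. -/
noncomputable def tCode (x : ℕ → I) (n : ℕ) : ℕ :=
  ((Finset.range n).filter fun k => (x k : ℝ) < (x n : ℝ)).card

/-- The combinatorial encoding `J : [0,1]^ℕ → 𝔐 = ∏_n {0,…,n}`, `J(x) = (t_n(x))_n`. -/
noncomputable def JCode (x : ℕ → I) (n : ℕ) : Fin (n + 1) :=
  ⟨tCode x n, Nat.lt_succ_of_le ((Finset.card_filter_le _ _).trans (Finset.card_range n).le)⟩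

namespace JCodeAux

open Finset Filter

/-! ### Combinatorial lemmas -/

lemma rank_lt_iff (z : ℕ → ℝ) (hz : ∀ i j, z i = z j → i = j) {n k : ℕ} (hk : k < n) :
    z k < z n ↔
      ((range n).filter fun j => z j < z k).card < ((range n).filter fun j => z j < z n).card := by
  constructor
  · intro h
    apply Finset.card_lt_card
    refine ⟨Finset.monotone_filter_right _ fun j _ hj => lt_trans hj h, fun hsub => ?_⟩
    have := hsub (Finset.mem_filter.2 ⟨Finset.mem_range.2 hk, h⟩)
    exact lt_irrefl _ (Finset.mem_filter.1 this).2
  · intro h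
    by_contra hlt
    have hne : z k ≠ z n := fun he => absurd (hz _ _ he) hk.ne
    have hnk : z n < z k := lt_of_le_of_ne (not_lt.1 hlt) (Ne.symm hne)
    exact absurd (Finset.card_le_card
      (Finset.monotone_filter_right _ fun j _ hj => lt_trans hj hnk)) (not_le.2 h)

section comp
variable {x y : ℕ → ℝ}
  (hx : ∀ i j, x i = x j → i = j) (hy : ∀ i j, y i = y j → i = j)

include hx hy in
/-- Equal Lehmer codes plus distinctness ⇒ identical order structure. -/
lemma comp_eq (ht : ∀ n, ((range n).filter fun k => x k < x n).card
           = ((range n).filter fun k => y k < y n).card) :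
    ∀ n k, k < n → (x k < x n ↔ y k < y n) := by
  intro n
  induction n using Nat.strong_induction_on with
  | _ n IH =>
    intro k hk
    have pair : ∀ j l, j < n → l < n → (x j < x l ↔ y j < y l) := by
      intro j l hj hl
      rcases lt_trichotomy j l with h | h | h
      · exact IH l hl j h
      · subst h; simp
      · constructor
        · intro hxx
          by_contra hyy
          have hyne : y j ≠ y l := fun he => absurd (hy _ _ he) h.ne'
          have : y l < y j := lt_of_le_of_ne (not_lt.1 hyy) (Ne.symm hyne)
          have := (IH j hj l h).2 this
          exact lt_asymm hxx this
        · intro hyy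
          by_contra hxx
          have hxne : x j ≠ x l := fun he => absurd (hx _ _ he) h.ne'
          have : x l < x j := lt_of_le_of_ne (not_lt.1 hxx) (Ne.symm hxne)
          have := (IH j hj l h).1 this
          exact lt_asymm hyy this
    have hrank : ((range n).filter fun j => x j < x k).card
        = ((range n).filter fun j => y j < y k).card := by
      congr 1
      apply Finset.filter_congr
      intro j hj
      rcases eq_or_ne j k with rfl | hjk
      · simp
      · simpa using pair j k (Finset.mem_range.1 hj) hk
    rw [rank_lt_iff x hx hk, rank_lt_iff y hy hk, hrank, ht n]

include hx hy in
/-- Symmetric form of `comp_eq` for arbitrary index pairs. -/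
lemma comp_all (hcomp : ∀ n k, k < n → (x k < x n ↔ y k < y n)) :
    ∀ j l, (x j < x l ↔ y j < y l) := by
  intro j l
  rcases lt_trichotomy j l with h | h | h
  · exact hcomp l j h
  · subst h; simp
  · constructor
    · intro hxx
      by_contra hyy
      have hyne : y j ≠ y l := fun he => absurd (hy _ _ he) h.ne'
      have : y l < y j := lt_of_le_of_ne (not_lt.1 hyy) (Ne.symm hyne)
      exact lt_asymm hxx ((hcomp j l h).2 this)
    · intro hyy
      by_contra hxx
      have hxne : x j ≠ x l := fun he => absurd (hx _ _ he) h.ne'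
      have : x l < x j := lt_of_le_of_ne (not_lt.1 hxx) (Ne.symm hxne)
      exact lt_asymm hyy ((hcomp j l h).1 this)

end comp

/-! ### Frequency estimates -/

lemma freq_le_freq {z : ℕ → ℝ} {a b : ℝ} (hab : a ≤ b) (N : ℕ) :
    ((((range N).filter fun k => z k < a).card : ℝ) / N)
      ≤ (((range N).filter fun k => z k < b).card : ℝ) / N := by
  rw [div_eq_mul_inv, div_eq_mul_inv]
  apply mul_le_mul_of_nonneg_right _ (by positivity)
  exact_mod_cast Finset.card_le_card
    (Finset.monotone_filter_right _ fun j _ hj => lt_of_lt_of_le hj hab)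

lemma freq_nonneg (z : ℕ → ℝ) (a : ℝ) (N : ℕ) :
    0 ≤ (((range N).filter fun k => z k < a).card : ℝ) / N := by positivity

lemma freq_le_one (z : ℕ → ℝ) (a : ℝ) (N : ℕ) :
    (((range N).filter fun k => z k < a).card : ℝ) / N ≤ 1 := by
  rcases Nat.eq_zero_or_pos N with rfl | hN
  · simp
  · apply div_le_one_of_le₀
    · exact_mod_cast (Finset.card_filter_le _ _).trans (Finset.card_range N).le
    · positivity

lemma freq_tendsto {z : ℕ → ℝ} {a : ℝ} (ha0 : 0 ≤ a) (ha1 : a ≤ 1)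
    (hq : ∀ q : ℚ, 0 ≤ (q : ℝ) → (q : ℝ) ≤ 1 →
      Tendsto (fun N : ℕ => (((range N).filter fun k => z k < (q : ℝ)).card : ℝ) / N)
        atTop (nhds (q : ℝ))) :
    Tendsto (fun N : ℕ => (((range N).filter fun k => z k < a).card : ℝ) / N)
      atTop (nhds a) := by
  rw [tendsto_order]
  constructor
  · intro b hb
    rcases lt_or_ge b 0 with hb0 | hb0
    · exact Eventually.of_forall fun N => lt_of_lt_of_le hb0 (freq_nonneg z a N)
    · obtain ⟨q, hq1, hq2⟩ := exists_rat_btwn hb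
      have hq0 : 0 ≤ (q : ℝ) := le_trans hb0 hq1.le
      have hqle1 : (q : ℝ) ≤ 1 := le_trans hq2.le ha1
      have := (tendsto_order.1 (hq q hq0 hqle1)).1 b hq1
      filter_upwards [this] with N hN
      exact lt_of_lt_of_le hN (freq_le_freq hq2.le N)
  · intro b hb
    rcases le_or_gt b 1 with hb1 | hb1
    · obtain ⟨q, hq1, hq2⟩ := exists_rat_btwn hb
      have hq0 : 0 ≤ (q : ℝ) := le_trans ha0 hq1.le
      have hqle1 : (q : ℝ) ≤ 1 := le_trans hq2.le hb1
      have := (tendsto_order.1 (hq q hq0 hqle1)).2 b hq2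
      filter_upwards [this] with N hN
      exact lt_of_le_of_lt (freq_le_freq hq1.le N) hN
    · exact Eventually.of_forall fun N => lt_of_le_of_lt (freq_le_one z a N) hb1

/-! ### Measure-theoretic lemmas -/

variable {μ : Measure (ℕ → I)} (hμ : IsProductLebesgue μ)

include hμ in
lemma meas_iInter (S : Finset ℕ) (s : ℕ → Set I) (hs : ∀ i ∈ S, MeasurableSet (s i)) :
    μ (⋂ i ∈ S, (fun x => x i) ⁻¹' s i) = ∏ i ∈ S, volume (s i) := by
  have hrestr : Measurable (S.restrict (π := fun _ : ℕ => I)) :=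
    measurable_pi_lambda _ fun i => measurable_pi_apply _
  have hset : (⋂ i ∈ S, (fun x : ℕ → I => x i) ⁻¹' s i)
      = S.restrict ⁻¹' (Set.univ.pi fun i : S => s i) := by
    ext x
    simp [Finset.restrict, Set.mem_pi]
  rw [hset, ← Measure.map_apply hrestr (MeasurableSet.univ_pi fun i => hs i i.2), hμ S,
    Measure.pi_pi]
  exact (Finset.prod_coe_sort S fun i => volume (s i))

include hμ in
lemma meas_eval (i : ℕ) (s : Set I) (hs : MeasurableSet s) :
    μ ((fun x => x i) ⁻¹' s) = volume s := by
  classical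
  have := meas_iInter hμ {i} (fun _ => s) (fun _ _ => hs)
  simpa using this

include hμ in
lemma coords_iIndep :
    ProbabilityTheory.iIndepFun
      (fun i (x : ℕ → I) => x i) μ := by
  rw [ProbabilityTheory.iIndepFun_iff_measure_inter_preimage_eq_mul]
  intro S sets hsets
  classical
  rw [meas_iInter hμ S sets hsets]
  exact Finset.prod_congr rfl fun i hi => (meas_eval hμ i _ (hsets i hi)).symm

include hμ in
lemma isProb : IsProbabilityMeasure μ := hμ.isProbabilityMeasure

include hμ in
lemma map_eval (i : ℕ) : μ.map (fun x => x i) = (volume : Measure I) := by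
  refine Measure.ext fun s hs => ?_
  rw [Measure.map_apply (measurable_pi_apply i) hs, meas_eval hμ i s hs]

lemma vol_I_singleton (t : I) : (volume : Measure I) {t} = 0 := by
  rw [unitInterval.volume_def,
    MeasurableEmbedding.comap_apply (MeasurableEmbedding.subtype_coe measurableSet_Icc)]
  simp

lemma vol_I_Iio {q : ℝ} (h0 : 0 ≤ q) (h1 : q ≤ 1) :
    (volume : Measure I) {t : I | (t : ℝ) < q} = ENNReal.ofReal q := by
  rw [unitInterval.volume_def,
    MeasurableEmbedding.comap_apply (MeasurableEmbedding.subtype_coe measurableSet_Icc)]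
  have : (Subtype.val '' {t : I | (t : ℝ) < q}) = Set.Ico 0 q := by
    ext r
    simp only [Set.mem_image, Set.mem_setOf_eq, Set.mem_Ico]
    constructor
    · rintro ⟨⟨r, hr⟩, h, rfl⟩; exact ⟨hr.1, h⟩
    · rintro ⟨hr0, hrq⟩; exact ⟨⟨r, hr0, le_trans hrq.le h1⟩, hrq, rfl⟩
  rw [this, Real.volume_Ico, sub_zero]

include hμ in
lemma diag_null {i j : ℕ} (hij : i ≠ j) : μ {x | x i = x j} = 0 := by
  haveI := isProb hμ
  have hind : ProbabilityTheory.IndepFun (fun x : ℕ → I => x i) (fun x : ℕ → I => x j) μ :=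
    (coords_iIndep hμ).indepFun hij
  have hmap : μ.map (fun x : ℕ → I => (x i, x j))
      = ((volume : Measure I)).prod (volume : Measure I) := by
    have := (ProbabilityTheory.indepFun_iff_map_prod_eq_prod_map_map
      (measurable_pi_apply i).aemeasurable (measurable_pi_apply j).aemeasurable).1 hind
    rw [this, map_eval hμ i, map_eval hμ j]
  have hdiag : MeasurableSet {p : I × I | p.1 = p.2} :=
    (isClosed_eq continuous_fst continuous_snd).measurableSet
  have : μ {x | x i = x j}
      = (((volume : Measure I)).prod (volume : Measure I)) {p | p.1 = p.2} := by
    rw [← hmap, Measure.map_apply (by fun_prop) hdiag]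
    rfl
  rw [this, Measure.prod_apply hdiag]
  have : ∀ a : I, (volume : Measure I) (Prod.mk a ⁻¹' {p : I × I | p.1 = p.2}) = 0 := by
    intro a
    have : (Prod.mk a ⁻¹' {p : I × I | p.1 = p.2}) = {a} := by
      ext b; simp [eq_comm]
    rw [this]; exact vol_I_singleton a
  simp [this, vol_I_singleton]

include hμ in
lemma lln (q : ℚ) (h0 : 0 ≤ (q : ℝ)) (h1 : (q : ℝ) ≤ 1) :
    ∀ᵐ x ∂μ, Filter.Tendsto
      (fun N : ℕ => (((range N).filter fun k => (x k : ℝ) < (q : ℝ)).card : ℝ) / N)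
      Filter.atTop (nhds (q : ℝ)) := by
  classical
  haveI := isProb hμ
  set B : Set I := {t : I | (t : ℝ) < (q : ℝ)} with hB
  have hBmeas : MeasurableSet B := measurable_subtype_coe measurableSet_Iio
  set X : ℕ → (ℕ → I) → ℝ := fun i x => B.indicator (fun _ => (1:ℝ)) (x i) with hX
  have hXi : ∀ i, X i = fun x => ((fun x : ℕ → I => x i) ⁻¹' B).indicator (fun _ => (1:ℝ)) x := by
    intro i; funext x
    simp [hX, Set.indicator_apply, Set.mem_preimage]
  have hf : Measurable (B.indicator (fun _ => (1:ℝ))) :=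
    measurable_const.indicator hBmeas
  have hint : Integrable (X 0) μ := by
    rw [hXi 0]
    exact (integrable_const (1:ℝ)).indicator (hBmeas.preimage (measurable_pi_apply 0))
  have hindep : Pairwise (Function.onFun (ProbabilityTheory.IndepFun · · μ) X) := by
    intro i j hij
    exact ProbabilityTheory.IndepFun.comp ((coords_iIndep hμ).indepFun hij) hf hf
  have hident : ∀ i, ProbabilityTheory.IdentDistrib (X i) (X 0) μ μ := by
    intro i
    have : ProbabilityTheory.IdentDistrib (fun x : ℕ → I => x i) (fun x : ℕ → I => x 0) μ μ :=
      ⟨(measurable_pi_apply i).aemeasurable, (measurable_pi_apply 0).aemeasurable,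
        by rw [map_eval hμ i, map_eval hμ 0]⟩
    exact this.comp hf
  have hexp : ∫ a, X 0 a ∂μ = (q : ℝ) := by
    rw [hXi 0, MeasureTheory.integral_indicator_const (1:ℝ)
      (hBmeas.preimage (measurable_pi_apply 0)), measureReal_def,
      meas_eval hμ 0 B hBmeas, hB, vol_I_Iio h0 h1]
    simp [ENNReal.toReal_ofReal h0]
  have := ProbabilityTheory.strong_law_ae_real X hint hindep hident
  rw [hexp] at this
  filter_upwards [this] with x hx
  convert hx using 2 with N
  rw [← Finset.sum_boole]
  congr 1

lemma freq_measurable (q : ℝ) (N : ℕ) :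
    Measurable (fun x : ℕ → I => (((range N).filter fun k => (x k : ℝ) < q).card : ℝ) / N) := by
  apply Measurable.div_const
  have : (fun x : ℕ → I => (((range N).filter fun k => (x k : ℝ) < q).card : ℝ))
      = fun x => ∑ k ∈ range N, if (x k : ℝ) < q then (1:ℝ) else 0 := by
    funext x; rw [Finset.sum_boole]
  rw [this]
  exact Finset.measurable_sum _ fun k _ => Measurable.ite
    (measurableSet_lt (measurable_subtype_coe.comp (measurable_pi_apply k)) measurable_const)
    measurable_const measurable_const

end JCodeAux

open JCodeAux Finset Filter

/-- The combinatorial encoding `J` distinguishes almost all points of the infinite-dimensional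
cube: `J` is injective on a Borel set of full measure. -/
theorem JCode_injective_on_full_measure_set
    (μ : Measure (ℕ → I)) (hμ : IsProductLebesgue μ) :
    ∃ S : Set (ℕ → I), MeasurableSet S ∧ μ Sᶜ = 0 ∧ Set.InjOn JCode S := by
  classical
  set S : Set (ℕ → I) :=
    {x | ∀ i j : ℕ, i ≠ j → x i ≠ x j} ∩
      ⋂ (q : ℚ), ⋂ (_ : 0 ≤ (q : ℝ)), ⋂ (_ : (q : ℝ) ≤ 1),
        {x | Tendsto (fun N : ℕ => (((range N).filter fun k => (x k : ℝ) < (q : ℝ)).card : ℝ) / N)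
          atTop (nhds (q : ℝ))} with hS
  have hSmeas : MeasurableSet S := by
    apply MeasurableSet.inter
    · have : {x : ℕ → I | ∀ i j : ℕ, i ≠ j → x i ≠ x j}
          = ⋂ (i : ℕ), ⋂ (j : ℕ), ⋂ (_ : i ≠ j), {x : ℕ → I | x i = x j}ᶜ := by
        ext x; simp [Set.mem_iInter]
      rw [this]
      refine MeasurableSet.iInter fun i => MeasurableSet.iInter fun j =>
        MeasurableSet.iInter fun _ => ?_
      exact ((isClosed_eq (continuous_apply i) (continuous_apply j)).measurableSet).compl
    · refine MeasurableSet.iInter fun q => MeasurableSet.iInter fun _ =>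
        MeasurableSet.iInter fun _ => ?_
      exact measurableSet_tendsto _ fun N => freq_measurable (q : ℝ) N
  have hnull : μ Sᶜ = 0 := by
    have h1 : ∀ᵐ x ∂μ, ∀ i j : ℕ, i ≠ j → x i ≠ x j := by
      rw [ae_all_iff]
      intro i
      rw [ae_all_iff]
      intro j
      by_cases hij : i = j
      · exact Eventually.of_forall fun x h => absurd hij h
      · have : ∀ᵐ x ∂μ, x i ≠ x j := by
          rw [Filter.eventually_iff, mem_ae_iff]
          have : {x : ℕ → I | x i ≠ x j}ᶜ = {x | x i = x j} := by
            ext x; simp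
          rw [this]
          exact diag_null hμ hij
        filter_upwards [this] with x hx _
        exact hx
    have h2 : ∀ᵐ x ∂μ, ∀ q : ℚ, 0 ≤ (q : ℝ) → (q : ℝ) ≤ 1 →
        Tendsto (fun N : ℕ => (((range N).filter fun k => (x k : ℝ) < (q : ℝ)).card : ℝ) / N)
          atTop (nhds (q : ℝ)) := by
      rw [ae_all_iff]
      intro q
      by_cases h0 : 0 ≤ (q : ℝ)
      · by_cases h1 : (q : ℝ) ≤ 1
        · filter_upwards [lln hμ q h0 h1] with x hx _ _
          exact hx
        · exact Eventually.of_forall fun x _ h => absurd h h1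
      · exact Eventually.of_forall fun x h _ => absurd h h0
    have hae : ∀ᵐ x ∂μ, x ∈ S := by
      filter_upwards [h1, h2] with x hx1 hx2
      refine ⟨hx1, ?_⟩
      simp only [Set.mem_iInter, Set.mem_setOf_eq]
      exact fun q h0 h1 => hx2 q h0 h1
    exact ae_iff.1 hae
  refine ⟨S, hSmeas, hnull, ?_⟩
  intro x hx y hy hJ
  have ht : ∀ n, tCode x n = tCode y n := fun n => congrArg Fin.val (congrFun hJ n)
  have hxd : ∀ i j : ℕ, i ≠ j → x i ≠ x j := hx.1
  have hyd : ∀ i j : ℕ, i ≠ j → y i ≠ y j := hy.1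
  set zx : ℕ → ℝ := fun k => (x k : ℝ) with hzx
  set zy : ℕ → ℝ := fun k => (y k : ℝ) with hzy
  have hzxinj : ∀ i j, zx i = zx j → i = j := by
    intro i j h
    by_contra hij
    exact hxd i j hij (Subtype.ext h)
  have hzyinj : ∀ i j, zy i = zy j → i = j := by
    intro i j h
    by_contra hij
    exact hyd i j hij (Subtype.ext h)
  have ht' : ∀ n, ((range n).filter fun k => zx k < zx n).card
      = ((range n).filter fun k => zy k < zy n).card := ht
  have hcomp := comp_eq hzxinj hzyinj ht'
  have hall := comp_all hzxinj hzyinj hcomp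
  have hcount : ∀ n N, ((range N).filter fun k => zx k < zx n).card
      = ((range N).filter fun k => zy k < zy n).card := by
    intro n N
    congr 1
    apply Finset.filter_congr
    intro k _
    simpa using hall k n
  have hqx : ∀ q : ℚ, 0 ≤ (q : ℝ) → (q : ℝ) ≤ 1 →
      Tendsto (fun N : ℕ => (((range N).filter fun k => zx k < (q : ℝ)).card : ℝ) / N)
        atTop (nhds (q : ℝ)) := by
    intro q h0 h1
    have := hx.2
    simp only [Set.mem_iInter, Set.mem_setOf_eq] at this
    exact this q h0 h1
  have hqy : ∀ q : ℚ, 0 ≤ (q : ℝ) → (q : ℝ) ≤ 1 →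
      Tendsto (fun N : ℕ => (((range N).filter fun k => zy k < (q : ℝ)).card : ℝ) / N)
        atTop (nhds (q : ℝ)) := by
    intro q h0 h1
    have := hy.2
    simp only [Set.mem_iInter, Set.mem_setOf_eq] at this
    exact this q h0 h1
  funext n
  have htx : Tendsto (fun N : ℕ => (((range N).filter fun k => zx k < zx n).card : ℝ) / N)
      atTop (nhds (zx n)) := freq_tendsto (x n).2.1 (x n).2.2 hqx
  have hty : Tendsto (fun N : ℕ => (((range N).filter fun k => zy k < zy n).card : ℝ) / N)
      atTop (nhds (zy n)) := freq_tendsto (y n).2.1 (y n).2.2 hqy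
  have heq : (fun N : ℕ => (((range N).filter fun k => zx k < zx n).card : ℝ) / N)
      = fun N : ℕ => (((range N).filter fun k => zy k < zy n).card : ℝ) / N := by
    funext N
    rw [hcount n N]
  rw [heq] at htx
  exact Subtype.ext (tendsto_nhds_unique htx hty)
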